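/- arXiv:2206.04492 — 2 statements merged into one kernel-verified Lean document; each statement's English description precedes it below -/
import Mathlib

section
/- Contour-integral representation on a vertical line: let c > 0, β > 0, C' > 0, and let f be a holomorphic function on the half-plane {z ∈ ℂ : Re z > −c} satisfying |f(z)| ≤ C' (1+|z|²)^{−β/2} there. Then for every z₀ ∈ ℂ with Re z₀ > −c/2, the integral below converges absolutely and f(z₀) = (1/(2π)) ∫_{−∞}^{∞} f(−c/2 + it) (z₀ + c/2 − it)^{−1} dt. -/
open MeasureTheory Complex intervalIntegral Set Filter
open scoped Interval Topology
set_option maxHeartbeats 1000000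


lemma aux_horiz (z₀ : ℂ) (m a₁ a₂ : ℝ) (hm : m ≠ z₀.im) :
    ∫ x in a₁..a₂, ((x:ℂ) + m*I - z₀)⁻¹ =
      Complex.log ((a₂:ℂ) + m*I - z₀) - Complex.log ((a₁:ℂ) + m*I - z₀) := by
  have him : ∀ x : ℝ, ((x:ℂ) + m*I - z₀).im = m - z₀.im := by intro x; simp
  have hne : ∀ x : ℝ, ((x:ℂ) + m*I - z₀) ≠ 0 := by
    intro x h
    exact hm (sub_eq_zero.1 (by rw [← him x, h, Complex.zero_im]))
  apply intervalIntegral.integral_eq_sub_of_hasDerivAt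
  · intro x hx
    have h1 : HasDerivAt (fun z : ℂ => Complex.log (z + (m*I - z₀)))
        (((x:ℂ) + (m*I - z₀))⁻¹ * 1) (x:ℂ) := by
      refine HasDerivAt.comp _ (Complex.hasDerivAt_log ?_) ((hasDerivAt_id _).add_const _)
      rw [Complex.mem_slitPlane_iff]
      right
      rw [← add_sub_assoc, him x]
      exact sub_ne_zero.2 hm
    have h2 := h1.comp_ofReal
    simp only [mul_one, ← add_sub_assoc] at h2 ⊢
    exact h2
  · apply Continuous.intervalIntegrable
    exact Continuous.inv₀ (by continuity) hne

lemma aux_vert_right (z₀ : ℂ) (a b₁ b₂ : ℝ) (ha : z₀.re < a) :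
    ∫ y in b₁..b₂, (I * ((a:ℂ) + y*I - z₀)⁻¹) =
      Complex.log ((a:ℂ) + b₂*I - z₀) - Complex.log ((a:ℂ) + b₁*I - z₀) := by
  have hre : ∀ y : ℝ, ((a:ℂ) + y*I - z₀).re = a - z₀.re := by intro y; simp
  have hne : ∀ y : ℝ, ((a:ℂ) + y*I - z₀) ≠ 0 := by
    intro y h
    have := hre y; rw [h, Complex.zero_re] at this
    linarith
  apply intervalIntegral.integral_eq_sub_of_hasDerivAt
  · intro y hy
    have h1 : HasDerivAt (fun z : ℂ => Complex.log ((a:ℂ) + z*I - z₀))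
        (((a:ℂ) + (y:ℂ)*I - z₀)⁻¹ * I) (y:ℂ) := by
      refine HasDerivAt.comp _ (Complex.hasDerivAt_log ?_) ?_
      · rw [Complex.mem_slitPlane_iff]; left; rw [hre y]; linarith
      · simpa using (((hasDerivAt_id ((y:ℂ))).mul_const I).const_add ((a:ℂ))).sub_const z₀
    have h2 := h1.comp_ofReal
    rw [mul_comm]
    exact h2
  · apply Continuous.intervalIntegrable
    exact continuous_const.mul (Continuous.inv₀ (by continuity) hne)

lemma aux_vert_left (z₀ : ℂ) (a b₁ b₂ : ℝ) (ha : a < z₀.re) :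
    ∫ y in b₁..b₂, (I * ((a:ℂ) + y*I - z₀)⁻¹) =
      Complex.log (z₀ - a - b₂*I) - Complex.log (z₀ - a - b₁*I) := by
  have hre : ∀ y : ℝ, (z₀ - a - (y:ℂ)*I).re = z₀.re - a := by intro y; simp
  have hne : ∀ y : ℝ, (z₀ - a - (y:ℂ)*I) ≠ 0 := by
    intro y h
    have := hre y; rw [h, Complex.zero_re] at this
    linarith
  have hne' : ∀ y : ℝ, ((a:ℂ) + y*I - z₀) ≠ 0 := by
    intro y h
    apply hne y
    have : (z₀ - a - (y:ℂ)*I) = -((a:ℂ) + y*I - z₀) := by ring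
    rw [this, h, neg_zero]
  apply intervalIntegral.integral_eq_sub_of_hasDerivAt
  · intro y hy
    have h1 : HasDerivAt (fun z : ℂ => Complex.log (z₀ - (a:ℂ) - z*I))
        ((z₀ - (a:ℂ) - (y:ℂ)*I)⁻¹ * (-I)) (y:ℂ) := by
      refine HasDerivAt.comp _ (Complex.hasDerivAt_log ?_) ?_
      · rw [Complex.mem_slitPlane_iff]; left; rw [hre y]; linarith
      · have := (((hasDerivAt_id ((y:ℂ))).mul_const I).const_sub (z₀ - (a:ℂ)))
        simpa [sub_sub] using this
    have h2 := h1.comp_ofReal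
    have heq : (z₀ - (a:ℂ) - (y:ℂ)*I)⁻¹ * (-I) = I * (((a:ℂ) + (y:ℂ)*I - z₀)⁻¹) := by
      rw [show ((a:ℂ) + (y:ℂ)*I - z₀) = -(z₀ - (a:ℂ) - (y:ℂ)*I) by ring, inv_neg]
      ring
    rw [← heq]
    exact h2
  · apply Continuous.intervalIntegrable
    exact continuous_const.mul (Continuous.inv₀ (by continuity) hne')

lemma aux_log_neg_sub {w : ℂ} (hw : w.im < 0) : Complex.log (-w) - Complex.log w = (Real.pi : ℂ) * I := by
  have hw0 : w ≠ 0 := by intro h; rw [h] at hw; simp at hw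
  rw [Complex.log, Complex.log, norm_neg, Complex.arg_neg_eq_arg_add_pi_of_im_neg hw]
  push_cast
  ring

lemma aux_log_neg_sub' {w : ℂ} (hw : 0 < w.im) : Complex.log w - Complex.log (-w) = (Real.pi : ℂ) * I := by
  have hw0 : w ≠ 0 := by intro h; rw [h] at hw; simp at hw
  rw [Complex.log, Complex.log, norm_neg, Complex.arg_neg_eq_arg_sub_pi_of_im_pos hw]
  push_cast
  ring

lemma aux_rect_inv (z₀ : ℂ) (σ R T : ℝ) (h₁ : σ < z₀.re) (h₂ : z₀.re < R) (h₃ : |z₀.im| < T) :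
    (∫ x in σ..R, ((x:ℂ) + (-T:ℝ)*I - z₀)⁻¹) - (∫ x in σ..R, ((x:ℂ) + (T:ℝ)*I - z₀)⁻¹)
      + (∫ y in (-T)..T, (I * ((R:ℂ) + y*I - z₀)⁻¹))
      - (∫ y in (-T)..T, (I * ((σ:ℂ) + y*I - z₀)⁻¹)) = 2 * (Real.pi : ℂ) * I := by
  have hT : 0 < T := lt_of_le_of_lt (abs_nonneg _) h₃
  have hyT : z₀.im < T := lt_of_le_of_lt (le_abs_self _) h₃
  have hyT' : -T < z₀.im := neg_lt_of_abs_lt h₃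
  rw [aux_horiz z₀ (-T) σ R (by linarith), aux_horiz z₀ T σ R (by linarith),
    aux_vert_right z₀ R (-T) T h₂, aux_vert_left z₀ σ (-T) T h₁]
  have e1 : z₀ - (σ:ℂ) - ((T:ℝ):ℂ)*I = -((σ:ℂ) + ((T:ℝ):ℂ)*I - z₀) := by ring
  have e2 : z₀ - (σ:ℂ) - ((-T:ℝ):ℂ)*I = -((σ:ℂ) + ((-T:ℝ):ℂ)*I - z₀) := by push_cast; ring
  rw [e1, e2]
  have hA : ((σ:ℂ) + ((-T:ℝ):ℂ)*I - z₀).im < 0 := by push_cast; simp; linarith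
  have hD : 0 < ((σ:ℂ) + ((T:ℝ):ℂ)*I - z₀).im := by simp; linarith
  have r1 := aux_log_neg_sub hA
  have r2 := aux_log_neg_sub' hD
  have : (Complex.log (-((σ:ℂ) + ((-T:ℝ):ℂ)*I - z₀)) - Complex.log ((σ:ℂ) + ((-T:ℝ):ℂ)*I - z₀))
      + (Complex.log ((σ:ℂ) + ((T:ℝ):ℂ)*I - z₀) - Complex.log (-((σ:ℂ) + ((T:ℝ):ℂ)*I - z₀)))
      = 2 * (Real.pi : ℂ) * I := by rw [r1, r2]; ring
  linear_combination this

lemma aux_rect_zero (F : ℂ → ℂ) (a₁ a₂ b₁ b₂ : ℝ)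
    (H : DifferentiableOn ℂ F ([[a₁, a₂]] ×ℂ [[b₁, b₂]])) :
    (∫ x in a₁..a₂, F ((x:ℂ) + b₁*I)) - (∫ x in a₁..a₂, F ((x:ℂ) + b₂*I))
      + (∫ y in b₁..b₂, (I * F ((a₂:ℂ) + y*I)))
      - (∫ y in b₁..b₂, (I * F ((a₁:ℂ) + y*I))) = 0 := by
  have := Complex.integral_boundary_rect_eq_zero_of_differentiableOn F
    ((a₁:ℂ) + (b₁:ℝ)*I) ((a₂:ℂ) + (b₂:ℝ)*I) (by simpa using H)
  simpa [smul_eq_mul, ← intervalIntegral.integral_const_mul] using this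

lemma aux_split (a b : ℝ) (A B : ℝ → ℂ) (hA : IntervalIntegrable A volume a b)
    (hB : IntervalIntegrable B volume a b) (Cst : ℂ) :
    ∫ x in a..b, (A x + Cst * B x) = (∫ x in a..b, A x) + Cst * ∫ x in a..b, B x := by
  rw [intervalIntegral.integral_add hA (hB.const_mul Cst), intervalIntegral.integral_const_mul]

lemma aux_integrable (c β C' : ℝ) (hc : 0 < c) (hβ : 0 < β) (hC' : 0 < C')
    (f : ℂ → ℂ) (hf : DifferentiableOn ℂ f {z : ℂ | -c < z.re})
    (hbound : ∀ z : ℂ, -c < z.re →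
      ‖f z‖ ≤ C' * (1 + ‖z‖ ^ 2) ^ (-β / 2))
    (z₀ : ℂ) (hz₀ : -c / 2 < z₀.re) :
    Integrable (fun t : ℝ =>
        f (-(c : ℂ) / 2 + (t : ℂ) * Complex.I) *
          (z₀ + (c : ℂ) / 2 - (t : ℂ) * Complex.I)⁻¹) := by
  set d : ℝ := z₀.re + c / 2 with hd
  have hd0 : 0 < d := by simp only [hd]; linarith
  set y₀ : ℝ := z₀.im
  set K : ℝ := Real.sqrt (2 + (1 + 2 * y₀ ^ 2) / d ^ 2) with hK
  have hK2 : K ^ 2 = 2 + (1 + 2 * y₀ ^ 2) / d ^ 2 := Real.sq_sqrt (by positivity)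
  have hK0 : 0 < K := Real.sqrt_pos.2 (by positivity)
  have hmem : ∀ t : ℝ, (-(c : ℂ) / 2 + (t : ℂ) * I) ∈ {z : ℂ | -c < z.re} := by
    intro t; simp only [Set.mem_setOf_eq]; simp; linarith
  have hqre : ∀ t : ℝ, (z₀ + (c : ℂ) / 2 - (t : ℂ) * I).re = d := by
    intro t; simp [hd]
  have hqim : ∀ t : ℝ, (z₀ + (c : ℂ) / 2 - (t : ℂ) * I).im = y₀ - t := by
    intro t; simp [y₀]
  have hqne : ∀ t : ℝ, (z₀ + (c : ℂ) / 2 - (t : ℂ) * I) ≠ 0 := by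
    intro t h
    have := hqre t; rw [h, Complex.zero_re] at this; linarith
  have hcont : Continuous (fun t : ℝ =>
      f (-(c : ℂ) / 2 + (t : ℂ) * I) * (z₀ + (c : ℂ) / 2 - (t : ℂ) * I)⁻¹) := by
    have h1 : Continuous fun t : ℝ => f (-(c : ℂ) / 2 + (t : ℂ) * I) :=
      (hf.continuousOn.comp_continuous (by continuity) hmem)
    exact h1.mul (Continuous.inv₀ (by continuity) hqne)
  refine Integrable.mono'
    (g := fun t : ℝ => (C' * K) * ((1 + ‖t‖ ^ 2) ^ (-(β + 1) / 2)))
    ?_ hcont.aestronglyMeasurable (Filter.Eventually.of_forall ?_)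
  · refine (integrable_rpow_neg_one_add_norm_sq ?_).const_mul _
    rw [Module.finrank_self]
    push_cast; linarith
  · intro t
    have hpre : (-(c:ℂ)/2 + (t:ℂ)*I).re = -c/2 := by simp
    have hpim : (-(c:ℂ)/2 + (t:ℂ)*I).im = t := by simp
    have h1 : ‖f (-(c : ℂ) / 2 + (t : ℂ) * I)‖ ≤ C' * (1 + t ^ 2) ^ (-β / 2) := by
      refine (hbound _ (hmem t)).trans ?_
      have hb : (1 : ℝ) + t ^ 2 ≤ 1 + ‖-(c : ℂ) / 2 + (t : ℂ) * I‖ ^ 2 := by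
        rw [Complex.sq_norm, Complex.normSq_apply, hpre, hpim]
        nlinarith [sq_nonneg c]
      exact mul_le_mul_of_nonneg_left
        (Real.rpow_le_rpow_of_nonpos (by positivity) hb (by linarith : -β / 2 ≤ 0)) hC'.le
    set q : ℂ := z₀ + (c : ℂ) / 2 - (t : ℂ) * I with hq
    have habs2 : ‖q‖ ^ 2 = d ^ 2 + (y₀ - t) ^ 2 := by
      rw [Complex.sq_norm, Complex.normSq_apply, hqre t, hqim t]; ring
    have hq0 : 0 < ‖q‖ := norm_pos_iff.2 (hqne t)
    have hs0 : (0:ℝ) < Real.sqrt (1 + t ^ 2) := Real.sqrt_pos.2 (by positivity)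
    have h2 : (‖q‖)⁻¹ ≤ K * (1 + t ^ 2) ^ (-(1:ℝ) / 2) := by
      have key : (1 + t ^ 2) ≤ K ^ 2 * (d ^ 2 + (y₀ - t) ^ 2) := by
        rw [hK2]
        have h6 : (1 + 2 * y₀ ^ 2) / d ^ 2 * d ^ 2 = 1 + 2 * y₀ ^ 2 := by field_simp
        nlinarith [sq_nonneg (t - 2 * y₀),
          mul_nonneg (div_nonneg (by positivity : (0:ℝ) ≤ 1 + 2 * y₀ ^ 2)
            (by positivity : (0:ℝ) ≤ d ^ 2)) (sq_nonneg (y₀ - t))]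
      have hsq : Real.sqrt (1 + t ^ 2) ≤ K * ‖q‖ := by
        have h7 := Real.sqrt_le_sqrt key
        rwa [Real.sqrt_mul (by positivity), Real.sqrt_sq hK0.le, ← habs2,
          Real.sqrt_sq (norm_nonneg _)] at h7
      have e : ((1 + t ^ 2 : ℝ)) ^ (-(1:ℝ) / 2) = (Real.sqrt (1 + t ^ 2))⁻¹ := by
        rw [neg_div, Real.rpow_neg (by positivity), ← Real.sqrt_eq_rpow]
      rw [e, inv_eq_one_div, inv_eq_one_div, mul_one_div,
        div_le_div_iff₀ hq0 hs0]
      nlinarith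
    have hnn : (0:ℝ) ≤ C' * (1 + t ^ 2) ^ (-β / 2) := by positivity
    calc ‖f (-(c : ℂ) / 2 + (t : ℂ) * I) * q⁻¹‖
        = ‖f (-(c : ℂ) / 2 + (t : ℂ) * I)‖ * (‖q‖)⁻¹ := by
          rw [norm_mul, norm_inv]
      _ ≤ (C' * (1 + t ^ 2) ^ (-β / 2)) * (K * (1 + t ^ 2) ^ (-(1:ℝ) / 2)) :=
          mul_le_mul h1 h2 (by positivity) hnn
      _ = C' * K * ((1 + t ^ 2) ^ (-β / 2) * (1 + t ^ 2) ^ (-(1:ℝ) / 2)) := by ring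
      _ = C' * K * (1 + ‖t‖ ^ 2) ^ (-(β + 1) / 2) := by
          rw [← Real.rpow_add (by positivity), Real.norm_eq_abs, _root_.sq_abs]
          congr 1
          ring

lemma aux_norm_bound (C' β c : ℝ) (hC' : 0 < C') (hβ : 0 < β) (f : ℂ → ℂ)
    (hbound : ∀ z : ℂ, -c < z.re →
      ‖f z‖ ≤ C' * (1 + ‖z‖ ^ 2) ^ (-β / 2))
    (z₀ z : ℂ) (T : ℝ) (hT : 0 < T) (hre : -c < z.re)
    (habs : T ≤ ‖z‖) (hdist : T / 2 ≤ ‖z - z₀‖) :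
    ‖f z * (z - z₀)⁻¹‖ ≤ C' * (1 + T ^ 2) ^ (-β / 2) * (2 / T) := by
  have h1 : ‖f z‖ ≤ C' * (1 + T ^ 2) ^ (-β / 2) := by
    refine (hbound z hre).trans ?_
    have hb : (1:ℝ) + T ^ 2 ≤ 1 + ‖z‖ ^ 2 := by
      nlinarith [norm_nonneg z]
    exact mul_le_mul_of_nonneg_left
      (Real.rpow_le_rpow_of_nonpos (by positivity) hb (by linarith : -β / 2 ≤ 0)) hC'.le
  have h2 : (‖z - z₀‖)⁻¹ ≤ 2 / T := by
    have h3 : (0:ℝ) < T / 2 := by linarith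
    have := one_div_le_one_div_of_le h3 hdist
    rw [one_div, one_div] at this
    refine this.trans ?_
    rw [inv_div]
  rw [norm_mul, norm_inv]
  exact mul_le_mul h1 h2 (by positivity) (by positivity)

/-- Contour-integral representation on a vertical line: if `f` is
holomorphic on `{Re z > -c}` with `|f(z)| ≤ C'(1+|z|²)^{-β/2}` there, then for every `z₀`
with `Re z₀ > -c/2`, the integral converges absolutely and
`f(z₀) = (1/2π) ∫_ℝ f(-c/2 + it) (z₀ + c/2 - it)⁻¹ dt`. -/
theorem stmt_16 (c β C' : ℝ) (hc : 0 < c) (hβ : 0 < β) (hC' : 0 < C')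
    (f : ℂ → ℂ) (hf : DifferentiableOn ℂ f {z : ℂ | -c < z.re})
    (hbound : ∀ z : ℂ, -c < z.re →
      ‖f z‖ ≤ C' * (1 + ‖z‖ ^ 2) ^ (-β / 2))
    (z₀ : ℂ) (hz₀ : -c / 2 < z₀.re) :
    Integrable (fun t : ℝ =>
        f (-(c : ℂ) / 2 + (t : ℂ) * Complex.I) *
          (z₀ + (c : ℂ) / 2 - (t : ℂ) * Complex.I)⁻¹) ∧
    f z₀ = (1 / (2 * (Real.pi : ℂ))) *
      ∫ t : ℝ, f (-(c : ℂ) / 2 + (t : ℂ) * Complex.I) *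
        (z₀ + (c : ℂ) / 2 - (t : ℂ) * Complex.I)⁻¹ := by
  have hInt := aux_integrable c β C' hc hβ hC' f hf hbound z₀ hz₀
  refine ⟨hInt, ?_⟩
  set φ : ℝ → ℂ := fun t : ℝ =>
    f (-(c : ℂ) / 2 + (t : ℂ) * I) * (z₀ + (c : ℂ) / 2 - (t : ℂ) * I)⁻¹ with hφ
  set S : Set ℂ := {z : ℂ | -c < z.re} with hS
  have hSo : IsOpen S := isOpen_lt continuous_const Complex.continuous_re
  have hz₀S : z₀ ∈ S := by simp only [hS, Set.mem_setOf_eq]; linarith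
  set σ : ℝ := -c / 2 with hσ
  set x₀ : ℝ := z₀.re with hx₀
  set y₀ : ℝ := z₀.im with hy₀
  have hσx : σ < x₀ := hz₀
  have hσc : -c < σ := by rw [hσ]; linarith
  set F : ℂ → ℂ := dslope f z₀ with hF
  have hFd : DifferentiableOn ℂ F S := (Complex.differentiableOn_dslope (hSo.mem_nhds hz₀S)).2 hf
  have hFc : ContinuousOn F S := hFd.continuousOn
  have hdec : ∀ z : ℂ, z ≠ z₀ → f z * (z - z₀)⁻¹ = F z + f z₀ * (z - z₀)⁻¹ := by
    intro z hne
    rw [hF, dslope_of_ne f hne, slope_def_field]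
    have h := sub_ne_zero.2 hne
    field_simp
    ring
  set T₀ : ℝ := max (max (2 * |y₀| + 1) (2 * |x₀| + 1)) (max (c + 1) (|σ| + 1)) with hT₀
  set J : ℝ → ℂ := fun T => ∫ y in (-T)..T, φ y with hJ
  -- the key eventual bound
  have hev : ∀ T : ℝ, T₀ ≤ T →
      ‖I * J T - 2 * (Real.pi:ℂ) * I * f z₀‖ ≤ 12 * C' * ((1 + T ^ 2) ^ (-β / 2)) := by
    intro T hT
    have h1 : 2 * |y₀| + 1 ≤ T := le_trans (le_trans (le_max_left _ _) (le_max_left _ _)) hT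
    have h2 : 2 * |x₀| + 1 ≤ T := le_trans (le_trans (le_max_right _ _) (le_max_left _ _)) hT
    have h3 : c + 1 ≤ T := le_trans (le_trans (le_max_left _ _) (le_max_right _ _)) hT
    have h4 : |σ| + 1 ≤ T := le_trans (le_trans (le_max_right _ _) (le_max_right _ _)) hT
    have hTpos : 0 < T := by linarith [abs_nonneg y₀]
    have hy₀T : |y₀| < T := by linarith [abs_nonneg y₀]
    have hx₀T : x₀ < T := by linarith [le_abs_self x₀, abs_nonneg x₀]
    have hσT : σ < T := by linarith [le_abs_self σ, abs_nonneg σ]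
    have hyy : -T < y₀ ∧ y₀ < T := abs_lt.1 hy₀T
    -- subset of half-plane
    have hsub : ([[σ, T]] ×ℂ [[-T, T]]) ⊆ S := by
      intro z hz
      have h5 := (Complex.mem_reProdIm.1 hz).1
      rcases Set.mem_uIcc.1 h5 with h6 | h6 <;>
        · simp only [hS, Set.mem_setOf_eq]; cases h6; linarith
    have hmemS : ∀ a b : ℝ, σ ≤ a → ((a:ℂ) + (b:ℂ)*I) ∈ S := by
      intro a b ha; simp only [hS, Set.mem_setOf_eq]; simp; linarith
    -- rectangle zero for F
    have h0 := aux_rect_zero F σ T (-T) T (hFd.mono hsub)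
    have hres := aux_rect_inv z₀ σ T T hσx hx₀T hy₀T
    -- continuity facts for interval integrability
    have hcont1 : ∀ b : ℝ, IntervalIntegrable (fun x : ℝ => F ((x:ℂ) + (b:ℂ)*I)) volume σ T := by
      intro b
      apply ContinuousOn.intervalIntegrable
      apply hFc.comp ((Continuous.continuousOn (by fun_prop)))
      intro x hx
      rcases Set.mem_uIcc.1 hx with h6 | h6 <;> exact hmemS x b (by cases h6; linarith)
    have hcont2 : ∀ a : ℝ, σ ≤ a → IntervalIntegrable (fun y : ℝ => I * F ((a:ℂ) + (y:ℂ)*I))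
        volume (-T) T := by
      intro a ha
      apply ContinuousOn.intervalIntegrable
      refine Continuous.continuousOn (continuous_const) |>.mul ?_
      apply hFc.comp ((Continuous.continuousOn (by fun_prop)))
      intro y hy
      exact hmemS a y ha
    have hinv1 : ∀ b : ℝ, b ≠ y₀ → IntervalIntegrable (fun x : ℝ => ((x:ℂ) + (b:ℂ)*I - z₀)⁻¹)
        volume σ T := by
      intro b hb
      apply Continuous.intervalIntegrable
      apply Continuous.inv₀ (by fun_prop)
      intro x hx
      apply hb
      have := congrArg Complex.im hx
      simpa [hy₀] using sub_eq_zero.1 (by simpa using this)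
    have hinv2 : ∀ a : ℝ, a ≠ x₀ → IntervalIntegrable (fun y : ℝ => I * ((a:ℂ) + (y:ℂ)*I - z₀)⁻¹)
        volume (-T) T := by
      intro a ha
      apply Continuous.intervalIntegrable
      refine continuous_const.mul (Continuous.inv₀ (by fun_prop) ?_)
      intro y hx
      apply ha
      have := congrArg Complex.re hx
      simpa [hx₀] using sub_eq_zero.1 (by simpa using this)
    -- decompose the four sides of g
    have hne_of_im : ∀ (a b : ℝ), b ≠ y₀ → ((a:ℂ) + (b:ℂ)*I) ≠ z₀ := by
      intro a b hb h
      exact hb (by rw [hy₀, ← h]; simp)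
    have hne_of_re : ∀ (a b : ℝ), a ≠ x₀ → ((a:ℂ) + (b:ℂ)*I) ≠ z₀ := by
      intro a b ha h
      exact ha (by rw [hx₀, ← h]; simp)
    have e₁ : (∫ x in σ..T, f ((x:ℂ) + ((-T:ℝ):ℂ)*I) * (((x:ℂ) + ((-T:ℝ):ℂ)*I) - z₀)⁻¹)
        = (∫ x in σ..T, F ((x:ℂ) + ((-T:ℝ):ℂ)*I))
          + f z₀ * ∫ x in σ..T, ((x:ℂ) + ((-T:ℝ):ℂ)*I - z₀)⁻¹ := by
      rw [← aux_split σ T _ _ (hcont1 (-T))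
        (hinv1 (-T) (by linarith)) (f z₀)]
      apply intervalIntegral.integral_congr
      intro x hx
      exact hdec _ (hne_of_im x (-T) (by linarith))
    have e₂ : (∫ x in σ..T, f ((x:ℂ) + ((T:ℝ):ℂ)*I) * (((x:ℂ) + ((T:ℝ):ℂ)*I) - z₀)⁻¹)
        = (∫ x in σ..T, F ((x:ℂ) + ((T:ℝ):ℂ)*I))
          + f z₀ * ∫ x in σ..T, ((x:ℂ) + ((T:ℝ):ℂ)*I - z₀)⁻¹ := by
      rw [← aux_split σ T _ _ (hcont1 T) (hinv1 T (by linarith)) (f z₀)]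
      apply intervalIntegral.integral_congr
      intro x hx
      exact hdec _ (hne_of_im x T (by linarith))
    have e₃ : (∫ y in (-T)..T, I * (f ((T:ℂ) + (y:ℂ)*I) * (((T:ℂ) + (y:ℂ)*I) - z₀)⁻¹))
        = (∫ y in (-T)..T, I * F ((T:ℂ) + (y:ℂ)*I))
          + f z₀ * ∫ y in (-T)..T, I * ((T:ℂ) + (y:ℂ)*I - z₀)⁻¹ := by
      rw [← aux_split (-T) T _ _ (hcont2 T (by linarith)) (hinv2 T (by linarith)) (f z₀)]
      apply intervalIntegral.integral_congr
      intro y hy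
      show I * (f ((T:ℂ) + (y:ℂ)*I) * (((T:ℂ) + (y:ℂ)*I) - z₀)⁻¹)
          = I * F ((T:ℂ) + (y:ℂ)*I) + f z₀ * (I * (((T:ℂ) + (y:ℂ)*I) - z₀)⁻¹)
      rw [hdec _ (hne_of_re T y (by linarith))]
      ring
    have e₄ : (∫ y in (-T)..T, I * (f ((σ:ℂ) + (y:ℂ)*I) * (((σ:ℂ) + (y:ℂ)*I) - z₀)⁻¹))
        = (∫ y in (-T)..T, I * F ((σ:ℂ) + (y:ℂ)*I))
          + f z₀ * ∫ y in (-T)..T, I * ((σ:ℂ) + (y:ℂ)*I - z₀)⁻¹ := by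
      rw [← aux_split (-T) T _ _ (hcont2 σ le_rfl) (hinv2 σ (by linarith)) (f z₀)]
      apply intervalIntegral.integral_congr
      intro y hy
      show I * (f ((σ:ℂ) + (y:ℂ)*I) * (((σ:ℂ) + (y:ℂ)*I) - z₀)⁻¹)
          = I * F ((σ:ℂ) + (y:ℂ)*I) + f z₀ * (I * (((σ:ℂ) + (y:ℂ)*I) - z₀)⁻¹)
      rw [hdec _ (hne_of_re σ y (by linarith))]
      ring
    -- left side equals -I * J T
    have e₅ : (∫ y in (-T)..T, I * (f ((σ:ℂ) + (y:ℂ)*I) * (((σ:ℂ) + (y:ℂ)*I) - z₀)⁻¹))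
        = -(I * J T) := by
      rw [hJ, ← intervalIntegral.integral_const_mul, ← intervalIntegral.integral_neg]
      apply intervalIntegral.integral_congr
      intro y hy
      have hcast : ((σ:ℝ):ℂ) = -(c:ℂ)/2 := by rw [hσ]; push_cast; ring
      have hq : (((σ:ℂ) + (y:ℂ)*I) - z₀) = -(z₀ + (c:ℂ)/2 - (y:ℂ)*I) := by
        rw [hcast]; ring
      rw [hφ]
      simp only []
      rw [hq, hcast, inv_neg]
      ring
    -- the key identity
    have hkey : (∫ x in σ..T, f ((x:ℂ) + ((-T:ℝ):ℂ)*I) * (((x:ℂ) + ((-T:ℝ):ℂ)*I) - z₀)⁻¹)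
        - (∫ x in σ..T, f ((x:ℂ) + ((T:ℝ):ℂ)*I) * (((x:ℂ) + ((T:ℝ):ℂ)*I) - z₀)⁻¹)
        + (∫ y in (-T)..T, I * (f ((T:ℂ) + (y:ℂ)*I) * (((T:ℂ) + (y:ℂ)*I) - z₀)⁻¹))
        + (I * J T) = 2 * (Real.pi:ℂ) * I * f z₀ := by
      have h8 : I * J T = -((∫ y in (-T)..T, I * F ((σ:ℂ) + (y:ℂ)*I))
            + f z₀ * ∫ y in (-T)..T, I * ((σ:ℂ) + (y:ℂ)*I - z₀)⁻¹) := by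
        rw [← e₄, e₅]
        ring
      rw [e₁, e₂, e₃, h8]
      linear_combination h0 + f z₀ * hres
    -- side bounds
    have hmain : ∀ (g : ℝ → ℂ) (a b : ℝ), a ≤ b → |b - a| ≤ 2 * T →
        (∀ x ∈ Set.Ioc a b, ‖g x‖ ≤ C' * (1 + T ^ 2) ^ (-β / 2) * (2 / T)) →
        ‖∫ x in a..b, g x‖ ≤ 4 * C' * ((1 + T ^ 2) ^ (-β / 2)) := by
      intro g a b hab h2T hg
      have hC := intervalIntegral.norm_integral_le_of_norm_le_const (C := C' * (1 + T ^ 2) ^ (-β / 2) * (2 / T)) (f := g) (a := a) (b := b) ?_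
      · refine hC.trans ?_
        have h14 : C' * (1 + T ^ 2) ^ (-β / 2) * (2 / T) * |b - a|
            ≤ C' * (1 + T ^ 2) ^ (-β / 2) * (2 / T) * (2 * T) :=
          mul_le_mul_of_nonneg_left h2T (by positivity)
        refine h14.trans (le_of_eq ?_)
        field_simp
        ring
      · intro x hx
        rw [Set.uIoc_of_le hab] at hx
        exact hg x hx
    have hb1 : ‖∫ x in σ..T, f ((x:ℂ) + ((-T:ℝ):ℂ)*I) * (((x:ℂ) + ((-T:ℝ):ℂ)*I) - z₀)⁻¹‖
        ≤ 4 * C' * ((1 + T ^ 2) ^ (-β / 2)) := by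
      refine hmain _ σ T hσT.le ?_ ?_
      · rw [abs_of_pos (by linarith)]
        have := neg_abs_le σ
        linarith
      · intro x hx
        refine aux_norm_bound C' β c hC' hβ f hbound z₀ _ T hTpos ?_ ?_ ?_
        · show -c < ((x:ℂ) + ((-T:ℝ):ℂ)*I).re
          simp only [Complex.add_re, Complex.ofReal_re, Complex.mul_re, Complex.ofReal_im,
            Complex.I_re, Complex.I_im]
          simp
          linarith [hx.1]
        · have h15 := Complex.abs_im_le_norm ((x:ℂ) + ((-T:ℝ):ℂ)*I)
          have h16 : ((x:ℂ) + ((-T:ℝ):ℂ)*I).im = -T := by simp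
          rw [h16, abs_neg, abs_of_pos hTpos] at h15
          exact h15
        · have h15 := Complex.abs_im_le_norm ((x:ℂ) + ((-T:ℝ):ℂ)*I - z₀)
          have h16 : ((x:ℂ) + ((-T:ℝ):ℂ)*I - z₀).im = -T - y₀ := by simp [hy₀]
          rw [h16] at h15
          have h17 : T / 2 ≤ |-T - y₀| := by
            rw [show -T - y₀ = -(T + y₀) by ring, abs_neg,
              abs_of_pos (by linarith [neg_abs_le y₀] : (0:ℝ) < T + y₀)]
            linarith [neg_abs_le y₀]
          linarith
    have hb2 : ‖∫ x in σ..T, f ((x:ℂ) + ((T:ℝ):ℂ)*I) * (((x:ℂ) + ((T:ℝ):ℂ)*I) - z₀)⁻¹‖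
        ≤ 4 * C' * ((1 + T ^ 2) ^ (-β / 2)) := by
      refine hmain _ σ T hσT.le ?_ ?_
      · rw [abs_of_pos (by linarith)]
        have := neg_abs_le σ
        linarith
      · intro x hx
        refine aux_norm_bound C' β c hC' hβ f hbound z₀ _ T hTpos ?_ ?_ ?_
        · show -c < ((x:ℂ) + ((T:ℝ):ℂ)*I).re
          simp
          linarith [hx.1]
        · have h15 := Complex.abs_im_le_norm ((x:ℂ) + ((T:ℝ):ℂ)*I)
          have h16 : ((x:ℂ) + ((T:ℝ):ℂ)*I).im = T := by simp
          rw [h16, abs_of_pos hTpos] at h15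
          exact h15
        · have h15 := Complex.abs_im_le_norm ((x:ℂ) + ((T:ℝ):ℂ)*I - z₀)
          have h16 : ((x:ℂ) + ((T:ℝ):ℂ)*I - z₀).im = T - y₀ := by simp [hy₀]
          rw [h16] at h15
          have h17 : T / 2 ≤ |T - y₀| := by
            rw [abs_of_pos (by linarith [le_abs_self y₀] : (0:ℝ) < T - y₀)]
            linarith [le_abs_self y₀]
          linarith
    have hb3 : ‖∫ y in (-T)..T, I * (f ((T:ℂ) + (y:ℂ)*I) * (((T:ℂ) + (y:ℂ)*I) - z₀)⁻¹)‖
        ≤ 4 * C' * ((1 + T ^ 2) ^ (-β / 2)) := by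
      refine hmain _ (-T) T (by linarith) ?_ ?_
      · rw [abs_of_pos (by linarith)]
        linarith
      · intro y hy
        rw [norm_mul, Complex.norm_I, one_mul]
        refine aux_norm_bound C' β c hC' hβ f hbound z₀ _ T hTpos ?_ ?_ ?_
        · show -c < ((T:ℂ) + (y:ℂ)*I).re
          simp
          linarith
        · have h15 := Complex.abs_re_le_norm ((T:ℂ) + (y:ℂ)*I)
          have h16 : ((T:ℂ) + (y:ℂ)*I).re = T := by simp
          rw [h16, abs_of_pos hTpos] at h15
          exact h15
        · have h15 := Complex.abs_re_le_norm ((T:ℂ) + (y:ℂ)*I - z₀)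
          have h16 : ((T:ℂ) + (y:ℂ)*I - z₀).re = T - x₀ := by simp [hx₀]
          rw [h16] at h15
          have h17 : T / 2 ≤ |T - x₀| := by
            rw [abs_of_pos (by linarith [le_abs_self x₀] : (0:ℝ) < T - x₀)]
            linarith [le_abs_self x₀]
          linarith
    have h9 : I * J T - 2 * (Real.pi:ℂ) * I * f z₀ =
        -(∫ x in σ..T, f ((x:ℂ) + ((-T:ℝ):ℂ)*I) * (((x:ℂ) + ((-T:ℝ):ℂ)*I) - z₀)⁻¹)
        + (∫ x in σ..T, f ((x:ℂ) + ((T:ℝ):ℂ)*I) * (((x:ℂ) + ((T:ℝ):ℂ)*I) - z₀)⁻¹)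
        - (∫ y in (-T)..T, I * (f ((T:ℂ) + (y:ℂ)*I) * (((T:ℂ) + (y:ℂ)*I) - z₀)⁻¹)) := by
      linear_combination hkey
    rw [h9]
    refine (norm_sub_le _ _).trans ?_
    linarith [norm_add_le
      (-(∫ x in σ..T, f ((x:ℂ) + ((-T:ℝ):ℂ)*I) * (((x:ℂ) + ((-T:ℝ):ℂ)*I) - z₀)⁻¹))
      ((∫ x in σ..T, f ((x:ℂ) + ((T:ℝ):ℂ)*I) * (((x:ℂ) + ((T:ℝ):ℂ)*I) - z₀)⁻¹)),
      norm_neg (∫ x in σ..T, f ((x:ℂ) + ((-T:ℝ):ℂ)*I) * (((x:ℂ) + ((-T:ℝ):ℂ)*I) - z₀)⁻¹)]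
  -- limits
  have htendb : Tendsto (fun T : ℝ => 12 * C' * ((1 + T ^ 2) ^ (-β / 2))) atTop (𝓝 0) := by
    have h10 : Tendsto (fun T : ℝ => 1 + T ^ 2) atTop atTop :=
      tendsto_atTop_add_const_left _ 1 (tendsto_pow_atTop two_ne_zero)
    have h11 := (tendsto_rpow_neg_atTop (by positivity : (0:ℝ) < β / 2)).comp h10
    have h12 : Tendsto (fun T : ℝ => (1 + T ^ 2) ^ (-β / 2)) atTop (𝓝 0) := by
      have : (fun T : ℝ => (1 + T ^ 2) ^ (-β / 2))
          = (fun x : ℝ => x ^ (-(β / 2))) ∘ (fun T : ℝ => 1 + T ^ 2) := by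
        funext T
        simp [Function.comp, neg_div]
      rw [this]
      exact h11
    have := h12.const_mul (12 * C')
    simpa using this
  have hsq : Tendsto (fun T => I * J T - 2 * (Real.pi:ℂ) * I * f z₀) atTop (𝓝 0) :=
    squeeze_zero_norm' ((eventually_ge_atTop T₀).mono hev) htendb
  have hlim1 : Tendsto (fun T => I * J T) atTop (𝓝 (2 * (Real.pi:ℂ) * I * f z₀)) := by
    have := hsq.add (tendsto_const_nhds (x := 2 * (Real.pi:ℂ) * I * f z₀))
    simpa using this
  have hlim2 : Tendsto (fun T => I * J T) atTop (𝓝 (I * ∫ t, φ t)) := by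
    exact (intervalIntegral_tendsto_integral hInt tendsto_neg_atTop_atBot tendsto_id).const_mul I
  have heq := tendsto_nhds_unique hlim2 hlim1
  have hπ : ((Real.pi:ℝ):ℂ) ≠ 0 := Complex.ofReal_ne_zero.2 Real.pi_ne_zero
  have h13 : (∫ t, φ t) = 2 * (Real.pi:ℂ) * f z₀ := by
    apply mul_left_cancel₀ Complex.I_ne_zero
    rw [heq]
    ring
  rw [h13]
  field_simp
end

section
/- Uniform decay of the harmonic-oscillator resolvent kernel function: let d ≥ 1, c > 0 and 0 < δ < 2c. For h ∈ (0,1] and z ∈ ℂ with Re z ≤ −c, define G_{z,h}(μ) = 2 ∫_0^{1/h} (1−hσ)^{−z/h} (1+hσ)^{z/h + d − 2} e^{−σμ} dσ for μ ∈ ℂ (with principal real powers of the positive reals 1−hσ and 1+hσ). Then G_{z,h} is holomorphic in μ on the sector D_δ = {μ ∈ ℂ : |Im μ| ≤ Re μ + δ}, and for every n ∈ ℕ there exists C_n > 0 (depending only on n, d, c, δ) such that for all h ∈ (0,1], all z with Re z ≤ −c, and all μ ∈ D_δ: |∂_μ^n G_{z,h}(μ)| ≤ C_n (1 + |μ|)^{−(n+1)}.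 -/
open MeasureTheory Set Metric

/-- The resolvent kernel function
`G_{z,h}(μ) = 2 ∫_0^{1/h} (1-hσ)^{-z/h} (1+hσ)^{z/h+d-2} e^{-σμ} dσ`. -/
noncomputable def Gker (d : ℕ) (z : ℂ) (h : ℝ) (μ : ℂ) : ℂ :=
  2 * ∫ σ in (0 : ℝ)..(1 / h),
      ((1 - h * σ : ℝ) : ℂ) ^ (-z / (h : ℂ)) *
        ((1 + h * σ : ℝ) : ℂ) ^ (z / (h : ℂ) + (d : ℂ) - 2) *
        Complex.exp (-(σ : ℂ) * μ)

/-- The `n`-times μ-differentiated integrand. -/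
noncomputable def Fk (d : ℕ) (z : ℂ) (h : ℝ) (n : ℕ) (μ : ℂ) (σ : ℝ) : ℂ :=
  ((1 - h * σ : ℝ) : ℂ) ^ (-z / (h : ℂ)) *
    ((1 + h * σ : ℝ) : ℂ) ^ (z / (h : ℂ) + (d : ℂ) - 2) *
    ((-(σ : ℂ)) ^ n * Complex.exp (-(σ : ℂ) * μ))

lemma aux_exp_ineq {x : ℝ} (hx : 0 ≤ x) : (1 - x) * Real.exp (2 * x) ≤ 1 + x := by
  have hg : ∀ y : ℝ, HasDerivAt (fun t => 1 + t - (1 - t) * Real.exp (2 * t))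
      (1 - (1 - 2 * y) * Real.exp (2 * y)) y := by
    intro y
    have h1 : HasDerivAt (fun t : ℝ => 1 + t) 1 y := by
      simpa using (hasDerivAt_id y).const_add (1 : ℝ)
    have h2 : HasDerivAt (fun t : ℝ => Real.exp (2 * t)) (Real.exp (2 * y) * 2) y := by
      simpa using ((hasDerivAt_id y).const_mul (2 : ℝ)).exp
    have h3 : HasDerivAt (fun t : ℝ => 1 - t) (-1) y := by
      simpa using (hasDerivAt_id y).const_sub (1 : ℝ)
    have h4 := h3.mul h2
    have h5 := h1.sub h4
    refine h5.congr_deriv ?_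
    ring
  have mono : Monotone fun t : ℝ => 1 + t - (1 - t) * Real.exp (2 * t) := by
    apply monotone_of_deriv_nonneg
    · exact fun y => ((hg y).differentiableAt)
    · intro y
      rw [(hg y).deriv]
      have h6 : (1 : ℝ) - 2 * y ≤ Real.exp (-(2 * y)) := by
        have := Real.add_one_le_exp (-(2 * y)); linarith
      have h7 : Real.exp (-(2 * y)) * Real.exp (2 * y) = 1 := by
        rw [← Real.exp_add]; simp
      nlinarith [Real.exp_pos (2 * y)]
  have := mono hx
  simp only [mul_zero, Real.exp_zero, mul_one, sub_zero, add_zero, zero_mul] at this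
  norm_num at this
  linarith

lemma Fk_norm_le (d : ℕ) (c : ℝ) (z : ℂ) (h : ℝ) (hh : 0 < h) (hz : z.re ≤ -c) (hc : 0 < c)
    (n : ℕ) (μ : ℂ) {σ : ℝ} (hσ0 : 0 ≤ σ) (hσb : σ ≤ 1 / h) :
    ‖Fk d z h n μ σ‖ ≤ 2 ^ d * σ ^ n * Real.exp (-σ * (2 * c + μ.re)) := by
  have hx0 : 0 ≤ h * σ := by positivity
  have hx1 : h * σ ≤ 1 := by
    rw [mul_comm]; exact (le_div_iff₀ hh).mp hσb
  set a : ℝ := -z.re / h with ha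
  have ha0 : 0 < a := div_pos (by linarith) hh
  have h1b : (0 : ℝ) ≤ 1 - h * σ := by linarith
  have h2b : (0 : ℝ) < 1 + h * σ := by linarith
  have hre1 : (-z / (h : ℂ)).re = a := by
    rw [Complex.div_ofReal_re, Complex.neg_re]
  have e1 : ‖((1 - h * σ : ℝ) : ℂ) ^ (-z / (h : ℂ))‖ = (1 - h * σ) ^ a := by
    rw [Complex.norm_cpow_eq_rpow_re_of_nonneg h1b (by rw [hre1]; exact ne_of_gt ha0), hre1]
  have e2 : ‖((1 + h * σ : ℝ) : ℂ) ^ (z / (h : ℂ) + (d : ℂ) - 2)‖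
      = (1 + h * σ) ^ (-a + ((d : ℝ) - 2)) := by
    have hre2 : (z / (h : ℂ) + (d : ℂ) - 2).re = -a + ((d : ℝ) - 2) := by
      simp [Complex.add_re, Complex.sub_re, Complex.div_ofReal_re, ha]
      ring
    rw [Complex.norm_cpow_eq_rpow_re_of_pos h2b, hre2]
  have e3 : ‖(-(σ : ℂ)) ^ n * Complex.exp (-(σ : ℂ) * μ)‖
      = σ ^ n * Real.exp (-σ * μ.re) := by
    rw [norm_mul, norm_pow, norm_neg, Complex.norm_real, Real.norm_eq_abs, abs_of_nonneg hσ0,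
      Complex.norm_exp]
    congr 2
    simp [Complex.mul_re]
  have key : (1 - h * σ) ^ a * (1 + h * σ) ^ (-a + ((d : ℝ) - 2))
      ≤ 2 ^ d * Real.exp (-(2 * c) * σ) := by
    rw [Real.rpow_add h2b]
    have k1 : (1 + h * σ) ^ ((d : ℝ) - 2) ≤ 2 ^ d := by
      calc (1 + h * σ) ^ ((d : ℝ) - 2) ≤ (1 + h * σ) ^ ((d : ℝ)) :=
            Real.rpow_le_rpow_of_exponent_le (by linarith) (by linarith)
        _ ≤ (2 : ℝ) ^ ((d : ℝ)) :=
            Real.rpow_le_rpow (by linarith) (by linarith) (Nat.cast_nonneg d)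
        _ = 2 ^ d := Real.rpow_natCast 2 d
    have k2 : (1 - h * σ) ^ a * (1 + h * σ) ^ (-a) ≤ Real.exp (-(2 * c) * σ) := by
      have hdiv : (1 - h * σ) / (1 + h * σ) ≤ Real.exp (-(2 * (h * σ))) := by
        rw [div_le_iff₀ h2b]
        have hk := aux_exp_ineq hx0
        have hee : Real.exp (-(2 * (h * σ))) * Real.exp (2 * (h * σ)) = 1 := by
          rw [← Real.exp_add]; simp
        nlinarith [Real.exp_pos (2 * (h * σ)), Real.exp_pos (-(2 * (h * σ)))]
      calc (1 - h * σ) ^ a * (1 + h * σ) ^ (-a)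
          = ((1 - h * σ) / (1 + h * σ)) ^ a := by
            rw [Real.div_rpow h1b h2b.le, Real.rpow_neg h2b.le, div_eq_mul_inv]
        _ ≤ (Real.exp (-(2 * (h * σ)))) ^ a :=
            Real.rpow_le_rpow (div_nonneg h1b h2b.le) hdiv ha0.le
        _ = Real.exp (-(2 * (h * σ)) * a) := (Real.exp_mul _ _).symm
        _ ≤ Real.exp (-(2 * c) * σ) := by
            apply Real.exp_le_exp.mpr
            have harg : -(2 * (h * σ)) * a = 2 * z.re * σ := by
              rw [ha]; field_simp
            rw [harg]; nlinarith
    calc (1 - h * σ) ^ a * ((1 + h * σ) ^ (-a) * (1 + h * σ) ^ ((d : ℝ) - 2))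
        = ((1 - h * σ) ^ a * (1 + h * σ) ^ (-a)) * (1 + h * σ) ^ ((d : ℝ) - 2) := by ring
      _ ≤ Real.exp (-(2 * c) * σ) * 2 ^ d := by
          apply mul_le_mul k2 k1 (by positivity) (Real.exp_pos _).le
      _ = 2 ^ d * Real.exp (-(2 * c) * σ) := by ring
  have habs : ‖Fk d z h n μ σ‖
      = (1 - h * σ) ^ a * (1 + h * σ) ^ (-a + ((d : ℝ) - 2)) * (σ ^ n * Real.exp (-σ * μ.re)) := by
    unfold Fk
    rw [norm_mul, norm_mul, e1, e2, e3]
  rw [habs]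
  calc (1 - h * σ) ^ a * (1 + h * σ) ^ (-a + ((d : ℝ) - 2)) * (σ ^ n * Real.exp (-σ * μ.re))
      ≤ (2 ^ d * Real.exp (-(2 * c) * σ)) * (σ ^ n * Real.exp (-σ * μ.re)) := by
        apply mul_le_mul_of_nonneg_right key (by positivity)
    _ = 2 ^ d * σ ^ n * (Real.exp (-(2 * c) * σ) * Real.exp (-σ * μ.re)) := by ring
    _ = 2 ^ d * σ ^ n * Real.exp (-σ * (2 * c + μ.re)) := by
        rw [← Real.exp_add]
        congr 1
        ring

lemma Fk_contOn (d : ℕ) (z : ℂ) (h : ℝ) (hh : 0 < h) (c : ℝ) (hz : z.re ≤ -c) (hc : 0 < c)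
    (n : ℕ) (μ : ℂ) :
    ContinuousOn (Fk d z h n μ) (Set.Ioc 0 (1 / h)) := by
  have hre1 : 0 < (-z / (h : ℂ)).re := by
    rw [Complex.div_ofReal_re, Complex.neg_re]
    exact div_pos (by linarith) hh
  have c1 : Continuous fun σ : ℝ => ((1 - h * σ : ℝ) : ℂ) ^ (-z / (h : ℂ)) :=
    (Complex.continuous_ofReal_cpow_const hre1).comp (by continuity)
  have c3 : Continuous fun σ : ℝ => (-(σ : ℂ)) ^ n * Complex.exp (-(σ : ℂ) * μ) := by
    continuity
  apply ((c1.continuousOn.mul ?_).mul c3.continuousOn)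
  intro σ hσ
  have hpos : (0 : ℝ) < 1 + h * σ := by nlinarith [hσ.1]
  refine ContinuousAt.continuousWithinAt (ContinuousAt.cpow ?_ continuousAt_const ?_)
  · fun_prop
  · exact Complex.ofReal_mem_slitPlane.2 hpos

lemma Fk_integrableOn (d : ℕ) (c : ℝ) (z : ℂ) (h : ℝ) (hh : 0 < h) (hz : z.re ≤ -c) (hc : 0 < c)
    (n : ℕ) (μ : ℂ) :
    IntegrableOn (Fk d z h n μ) (Set.Ioc 0 (1 / h)) := by
  apply Integrable.mono' (g := fun _ : ℝ => 2 ^ d * (1 / h) ^ n * Real.exp ((1 / h) * |2 * c + μ.re|))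
    (integrableOn_const measure_Ioc_lt_top.ne)
    ((Fk_contOn d z h hh c hz hc n μ).aestronglyMeasurable measurableSet_Ioc)
  filter_upwards [self_mem_ae_restrict measurableSet_Ioc] with σ hσ
  calc ‖Fk d z h n μ σ‖ ≤ 2 ^ d * σ ^ n * Real.exp (-σ * (2 * c + μ.re)) :=
        Fk_norm_le d c z h hh hz hc n μ hσ.1.le hσ.2
    _ ≤ 2 ^ d * (1 / h) ^ n * Real.exp ((1 / h) * |2 * c + μ.re|) := by
        have h1 : σ ^ n ≤ (1 / h) ^ n := pow_le_pow_left₀ hσ.1.le hσ.2 n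
        have h2 : -σ * (2 * c + μ.re) ≤ (1 / h) * |2 * c + μ.re| := by
          calc -σ * (2 * c + μ.re) = σ * (-(2 * c + μ.re)) := by ring
            _ ≤ σ * |2 * c + μ.re| :=
                mul_le_mul_of_nonneg_left (neg_le_abs _) hσ.1.le
            _ ≤ (1 / h) * |2 * c + μ.re| :=
                mul_le_mul_of_nonneg_right hσ.2 (abs_nonneg _)
        gcongr <;> first | exact hσ.1.le | exact hσ.2 | exact h2

lemma Fk_hasDerivAt (d : ℕ) (z : ℂ) (h : ℝ) (n : ℕ) (σ : ℝ) (μ : ℂ) :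
    HasDerivAt (fun μ' => Fk d z h n μ' σ) (Fk d z h (n + 1) μ σ) μ := by
  have he : HasDerivAt (fun μ' : ℂ => Complex.exp (-(σ : ℂ) * μ'))
      (Complex.exp (-(σ : ℂ) * μ) * (-(σ : ℂ))) μ := by
    have h0 : HasDerivAt (fun μ' : ℂ => -(σ : ℂ) * μ') (-(σ : ℂ)) μ := by
      simpa using (hasDerivAt_id μ).const_mul (-(σ : ℂ))
    exact h0.cexp
  have := ((he.const_mul ((-(σ : ℂ)) ^ n)).const_mul
    (((1 - h * σ : ℝ) : ℂ) ^ (-z / (h : ℂ)) *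
      ((1 + h * σ : ℝ) : ℂ) ^ (z / (h : ℂ) + (d : ℂ) - 2)))
  refine this.congr_deriv ?_
  unfold Fk
  ring

lemma Gn_hasDerivAt (d : ℕ) (c : ℝ) (z : ℂ) (h : ℝ) (hh : 0 < h) (hz : z.re ≤ -c) (hc : 0 < c)
    (n : ℕ) (μ₀ : ℂ) :
    HasDerivAt (fun μ => 2 * ∫ σ in Set.Ioc (0:ℝ) (1 / h), Fk d z h n μ σ)
      (2 * ∫ σ in Set.Ioc (0:ℝ) (1 / h), Fk d z h (n + 1) μ₀ σ) μ₀ := by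
  have key := hasDerivAt_integral_of_dominated_loc_of_deriv_le (𝕜 := ℂ)
    (μ := volume.restrict (Set.Ioc (0:ℝ) (1 / h)))
    (F := fun μ σ => Fk d z h n μ σ) (F' := fun μ σ => Fk d z h (n + 1) μ σ)
    (x₀ := μ₀)
    (bound := fun _ => 2 ^ d * (1 / h) ^ (n + 1) * Real.exp ((1 / h) * (|2 * c + μ₀.re| + 1)))
    (ball_mem_nhds μ₀ one_pos)
    (Filter.Eventually.of_forall fun μ =>
      ((Fk_contOn d z h hh c hz hc n μ).aestronglyMeasurable measurableSet_Ioc))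
    (Fk_integrableOn d c z h hh hz hc n μ₀)
    ((Fk_contOn d z h hh c hz hc (n + 1) μ₀).aestronglyMeasurable measurableSet_Ioc)
    ?_ (integrableOn_const measure_Ioc_lt_top.ne)
    (Filter.Eventually.of_forall fun σ => fun μ _ => Fk_hasDerivAt d z h n σ μ)
  · exact key.2.const_mul 2
  · filter_upwards [self_mem_ae_restrict measurableSet_Ioc] with σ hσ
    intro μ hμ
    have hb := Fk_norm_le d c z h hh hz hc (n + 1) μ hσ.1.le hσ.2
    have hre : |μ.re - μ₀.re| ≤ 1 := by
      have h1 : |(μ - μ₀).re| ≤ ‖μ - μ₀‖ := Complex.abs_re_le_norm _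
      have h2 : ‖μ - μ₀‖ < 1 := by
        rw [← Complex.dist_eq]; exact mem_ball.mp hμ
      rw [Complex.sub_re] at h1
      linarith
    have h2' : -(2 * c + μ.re) ≤ |2 * c + μ₀.re| + 1 := by
      have := neg_le_abs (2 * c + μ₀.re)
      have h3 : -(μ.re - μ₀.re) ≤ 1 := (abs_le.mp hre).1 |> neg_le_of_neg_le
      have h4 : μ₀.re - μ.re ≤ 1 := by
        have := (abs_le.mp hre).1; linarith
      linarith
    have harg : -σ * (2 * c + μ.re) ≤ (1 / h) * (|2 * c + μ₀.re| + 1) := by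
      calc -σ * (2 * c + μ.re) = σ * (-(2 * c + μ.re)) := by ring
        _ ≤ σ * (|2 * c + μ₀.re| + 1) := mul_le_mul_of_nonneg_left h2' hσ.1.le
        _ ≤ (1 / h) * (|2 * c + μ₀.re| + 1) :=
            mul_le_mul_of_nonneg_right hσ.2 (by positivity)
    calc ‖Fk d z h (n + 1) μ σ‖ ≤ 2 ^ d * σ ^ (n + 1) * Real.exp (-σ * (2 * c + μ.re)) := hb
      _ ≤ 2 ^ d * (1 / h) ^ (n + 1) * Real.exp ((1 / h) * (|2 * c + μ₀.re| + 1)) := by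
          gcongr <;> first | exact hσ.1.le | exact hσ.2 | exact harg

lemma Gker_eq (d : ℕ) (z : ℂ) (h : ℝ) (hh : 0 < h) :
    Gker d z h = fun μ => 2 * ∫ σ in Set.Ioc (0:ℝ) (1 / h), Fk d z h 0 μ σ := by
  funext μ
  unfold Gker
  rw [intervalIntegral.integral_of_le (by positivity)]
  congr 1
  apply setIntegral_congr_fun measurableSet_Ioc
  intro σ _
  unfold Fk
  ring

lemma iteratedDeriv_Gker (d : ℕ) (c : ℝ) (z : ℂ) (h : ℝ) (hh : 0 < h) (hz : z.re ≤ -c)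
    (hc : 0 < c) (n : ℕ) :
    iteratedDeriv n (Gker d z h) = fun μ => 2 * ∫ σ in Set.Ioc (0:ℝ) (1 / h), Fk d z h n μ σ := by
  induction n with
  | zero => rw [iteratedDeriv_zero]; exact Gker_eq d z h hh
  | succ n ih =>
    rw [iteratedDeriv_succ, ih]
    funext μ
    exact (Gn_hasDerivAt d c z h hh hz hc n μ).deriv

/-- Uniform decay of the harmonic-oscillator resolvent kernel function:
for `0 < δ < 2c`, `G_{z,h}` is holomorphic in `μ` on the sector
`D_δ = {μ : |Im μ| ≤ Re μ + δ}`, and for every `n` there is `C_n > 0` such that for all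
`h ∈ (0,1]`, all `z` with `Re z ≤ -c`, and all `μ ∈ D_δ`,
`|∂_μ^n G_{z,h}(μ)| ≤ C_n (1 + |μ|)^{-(n+1)}`. -/
theorem stmt_17 (d : ℕ) (hd : 1 ≤ d) (c δ : ℝ) (hc : 0 < c) (hδ0 : 0 < δ) (hδ : δ < 2 * c) :
    (∀ h ∈ Set.Ioc (0 : ℝ) 1, ∀ z : ℂ, z.re ≤ -c →
      DifferentiableOn ℂ (Gker d z h) {μ : ℂ | |μ.im| ≤ μ.re + δ}) ∧
    (∀ n : ℕ, ∃ C > 0, ∀ h ∈ Set.Ioc (0 : ℝ) 1, ∀ z : ℂ, z.re ≤ -c →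
      ∀ μ : ℂ, |μ.im| ≤ μ.re + δ →
        ‖iteratedDeriv n (Gker d z h) μ‖ ≤
          C * (1 + ‖μ‖) ^ (-((n : ℝ) + 1))) := by
  constructor
  · intro h hh z hz
    have hdiff : Differentiable ℂ (Gker d z h) := by
      rw [Gker_eq d z h hh.1]
      exact fun μ => (Gn_hasDerivAt d c z h hh.1 hz hc 0 μ).differentiableAt
    exact hdiff.differentiableOn
  · intro n
    have hε : (0:ℝ) < 2 * c - δ := by linarith
    set A : ℝ := (1 + δ) / (2 * c - δ) + 2 with hA
    have hA0 : 0 < A := by positivity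
    refine ⟨2 ^ (d + 1) * n.factorial * A ^ (n + 1), by positivity, ?_⟩
    intro h hh z hz μ hμ
    rw [iteratedDeriv_Gker d c z h hh.1 hz hc n]
    set s : ℝ := 2 * c + μ.re with hs
    have hμre : -δ ≤ μ.re := by
      have := abs_nonneg μ.im; linarith
    have hsε : 2 * c - δ ≤ s := by rw [hs]; linarith
    have hs0 : 0 < s := lt_of_lt_of_le hε hsε
    -- integrability of the dominating function on Ioi 0
    have hgIoi : IntegrableOn (fun σ : ℝ => 2 ^ d * σ ^ n * Real.exp (-σ * s)) (Set.Ioi 0) := by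
      have h0 := integrableOn_rpow_mul_exp_neg_mul_rpow
        (show (-1:ℝ) < (n:ℝ) by linarith [Nat.cast_nonneg (α := ℝ) n]) (zero_lt_one' ℝ) hs0
      have h1 : IntegrableOn (fun x : ℝ => x ^ (n:ℝ) * Real.exp (-s * x ^ (1:ℝ))) (Set.Ioi 0) := h0
      have h2 : IntegrableOn (fun x : ℝ => (2:ℝ) ^ d * (x ^ (n:ℝ) * Real.exp (-s * x ^ (1:ℝ))))
          (Set.Ioi 0) := h1.const_mul _
      apply h2.congr_fun ?_ measurableSet_Ioi
      intro x hx
      show 2 ^ d * (x ^ (n:ℝ) * Real.exp (-s * x ^ (1:ℝ))) = 2 ^ d * x ^ n * Real.exp (-x * s)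
      rw [Real.rpow_one, Real.rpow_natCast]
      have : -s * x = -x * s := by ring
      rw [this, mul_assoc]
    have hgIoc : IntegrableOn (fun σ : ℝ => 2 ^ d * σ ^ n * Real.exp (-σ * s))
        (Set.Ioc (0:ℝ) (1 / h)) := hgIoi.mono_set Set.Ioc_subset_Ioi_self
    have hb : ‖∫ σ in Set.Ioc (0:ℝ) (1 / h), Fk d z h n μ σ‖
        ≤ ∫ σ in Set.Ioc (0:ℝ) (1 / h), 2 ^ d * σ ^ n * Real.exp (-σ * s) := by
      apply norm_integral_le_of_norm_le hgIoc
      filter_upwards [self_mem_ae_restrict measurableSet_Ioc] with σ hσ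
      exact Fk_norm_le d c z h hh.1 hz hc n μ hσ.1.le hσ.2
    have hmono : ∫ σ in Set.Ioc (0:ℝ) (1 / h), 2 ^ d * σ ^ n * Real.exp (-σ * s)
        ≤ ∫ σ in Set.Ioi (0:ℝ), 2 ^ d * σ ^ n * Real.exp (-σ * s) := by
      apply setIntegral_mono_set hgIoi
      · filter_upwards [self_mem_ae_restrict measurableSet_Ioi] with σ hσ
        exact mul_nonneg (mul_nonneg (by positivity) (pow_nonneg (le_of_lt hσ) n))
          (Real.exp_pos _).le
      · exact HasSubset.Subset.eventuallyLE Set.Ioc_subset_Ioi_self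
    have hval : ∫ σ in Set.Ioi (0:ℝ), 2 ^ d * σ ^ n * Real.exp (-σ * s)
        = 2 ^ d * ((n.factorial : ℝ) / s ^ (n + 1)) := by
      have h0 := Real.integral_rpow_mul_exp_neg_mul_Ioi
        (show (0:ℝ) < (n:ℝ) + 1 by positivity) hs0
      have h1 : ∫ σ in Set.Ioi (0:ℝ), 2 ^ d * σ ^ n * Real.exp (-σ * s)
          = 2 ^ d * ∫ σ in Set.Ioi (0:ℝ), σ ^ ((n:ℝ) + 1 - 1) * Real.exp (-(s * σ)) := by
        rw [← MeasureTheory.integral_const_mul]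
        apply setIntegral_congr_fun measurableSet_Ioi
        intro x hx
        show 2 ^ d * x ^ n * Real.exp (-x * s) = 2 ^ d * (x ^ ((n:ℝ) + 1 - 1) * Real.exp (-(s * x)))
        have h4 : (n:ℝ) + 1 - 1 = ((n:ℕ):ℝ) := by ring
        rw [h4, Real.rpow_natCast]
        have h5 : -(s * x) = -x * s := by ring
        rw [h5]; ring
      rw [h1, h0]
      have h2 : Real.Gamma ((n:ℝ) + 1) = n.factorial := Real.Gamma_nat_eq_factorial n
      rw [h2]
      have h3 : ((1:ℝ) / s) ^ ((n:ℝ) + 1) = 1 / s ^ (n + 1) := by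
        rw [show ((n:ℝ) + 1) = ((n + 1 : ℕ) : ℝ) by push_cast; ring, Real.rpow_natCast]
        rw [one_div, one_div, inv_pow]
      rw [h3]
      ring
    -- and the sector comparison
    have habs : 1 + ‖μ‖ ≤ A * s := by
      have h1 : ‖μ‖ ≤ |μ.re| + |μ.im| := Complex.norm_le_abs_re_add_abs_im μ
      have h2 : (1 + δ) ≤ (1 + δ) / (2 * c - δ) * s := by
        have := mul_le_mul_of_nonneg_left hsε (by positivity : (0:ℝ) ≤ (1 + δ) / (2 * c - δ))
        rw [div_mul_cancel₀] at this
        · linarith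
        · exact ne_of_gt hε
      have hAs : A * s = (1 + δ) / (2 * c - δ) * s + 2 * s := by rw [hA]; ring
      rcases le_or_gt 0 μ.re with hre | hre
      · rw [abs_of_nonneg hre] at h1
        have : ‖μ‖ ≤ 2 * μ.re + δ := by linarith
        rw [hAs, hs]; linarith
      · rw [abs_of_neg hre] at h1
        have : ‖μ‖ ≤ δ := by linarith
        rw [hAs, hs]; linarith
    have hpow : (1 + ‖μ‖) ^ (n + 1) ≤ (A * s) ^ (n + 1) :=
      pow_le_pow_left₀ (by positivity) habs _
    have hrpow : (1 + ‖μ‖) ^ (-((n : ℝ) + 1)) = ((1 + ‖μ‖) ^ (n + 1))⁻¹ := by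
      rw [Real.rpow_neg (by positivity)]
      congr 1
      rw [show ((n:ℝ) + 1) = ((n + 1 : ℕ) : ℝ) by push_cast; ring, Real.rpow_natCast]
    rw [hrpow]
    have hfinal : ‖2 * ∫ σ in Set.Ioc (0:ℝ) (1 / h), Fk d z h n μ σ‖
        ≤ 2 * (2 ^ d * ((n.factorial : ℝ) / s ^ (n + 1))) := by
      rw [norm_mul, Complex.norm_two]
      have : ‖∫ σ in Set.Ioc (0:ℝ) (1 / h), Fk d z h n μ σ‖
          = ‖∫ σ in Set.Ioc (0:ℝ) (1 / h), Fk d z h n μ σ‖ := rfl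
      rw [this]
      have := le_trans hb (le_of_le_of_eq hmono hval)
      linarith
    apply le_trans hfinal
    have hcalc : 2 * (2 ^ d * ((n.factorial : ℝ) / s ^ (n + 1)))
        = 2 ^ (d + 1) * n.factorial * A ^ (n + 1) / (A * s) ^ (n + 1) := by
      rw [mul_pow]
      have hAp : (0:ℝ) < A ^ (n + 1) := by positivity
      field_simp
      ring
    rw [hcalc, div_eq_mul_inv]
    apply mul_le_mul_of_nonneg_left _ (by positivity)
    apply inv_anti₀ (by positivity) hpow
end
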